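/- For $a > 0$, $\mu > -1/2$, nonnegative integer $n$, and real $\xi$, one has $\int_{-1}^{1}(1-u)^{a + \frac{i\xi}{2} - 1}(1+u)^{a - \frac{i\xi}{2} - 1} C_n^{(\mu)}(u)\,du = \frac{2^{2a-1}(2\mu)_n}{n!} B\!\left(a+\tfrac{i\xi}{2}, a-\tfrac{i\xi}{2}\right) {}_3F_2\!\left(\begin{smallmatrix} -n,\ n+2\mu,\ a+\frac{i\xi}{2} \\ \mu+\frac12,\ 2a \end{smallmatrix}\;\middle|\;1\right)$. -/

import Mathlib

open MeasureTheory Finset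

noncomputable section

/-- Pochhammer symbol `(a)_n` for real `a`. -/
def pochR (a : ℝ) (n : ℕ) : ℝ := ∏ k ∈ Finset.range n, (a + k)

/-- Pochhammer symbol `(a)_n` for complex `a`. -/
def pochC (a : ℂ) (n : ℕ) : ℂ := ∏ k ∈ Finset.range n, (a + k)

/-- Gegenbauer polynomial `C_n^{(λ)}(x)` via the terminating `₂F₁` representation. -/
def Geg (n : ℕ) (lam : ℝ) (x : ℝ) : ℝ :=
  pochR (2 * lam) n / (Nat.factorial n) *
    ∑ l ∈ Finset.range (n + 1),
      pochR (-(n : ℝ)) l * pochR ((n : ℝ) + 2 * lam) l /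
        (pochR (lam + 1 / 2) l * (Nat.factorial l)) * ((1 - x) / 2) ^ l

/-- Terminating generalized hypergeometric sum `₃F₂(-n, a₂, a₃; b₁, b₂; 1)`. -/
def F32 (n : ℕ) (a2 a3 b1 b2 : ℂ) : ℂ :=
  ∑ l ∈ Finset.range (n + 1),
    pochC (-(n : ℂ)) l * pochC a2 l * pochC a3 l /
      (pochC b1 l * pochC b2 l * (Nat.factorial l))

/-- Beta function for complex arguments. -/
def BetaC (a b : ℂ) : ℂ := Complex.Gamma a * Complex.Gamma b / Complex.Gamma (a + b)

/-- Continuous Hahn polynomial `p_n(x; a, b, c, d)`. -/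
def hahn (n : ℕ) (x a b c d : ℂ) : ℂ :=
  Complex.I ^ n * pochC (a + c) n * pochC (a + d) n / (Nat.factorial n) *
    F32 n ((n : ℂ) + a + b + c + d - 1) (a + Complex.I * x) (a + c) (a + d)

lemma pochC_succ (z : ℂ) (l : ℕ) : pochC z (l + 1) = pochC z l * (z + l) :=
  Finset.prod_range_succ _ _

lemma pochR_cast (r : ℝ) (l : ℕ) : ((pochR r l : ℝ) : ℂ) = pochC (r : ℂ) l := by
  simp [pochR, pochC]

lemma Gamma_add_nat {z : ℂ} (hz : 0 < z.re) (l : ℕ) :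
    Complex.Gamma (z + l) = pochC z l * Complex.Gamma z := by
  induction l with
  | zero => simp [pochC]
  | succ l ih =>
    have hzl : (z + (l : ℂ)) ≠ 0 := by
      intro h
      have := congrArg Complex.re h
      simp [Complex.add_re, Complex.natCast_re] at this
      have : z.re = -(l : ℝ) := by linarith
      have hl : (0:ℝ) ≤ (l:ℝ) := Nat.cast_nonneg l
      linarith
    have h1 : (z : ℂ) + ((l + 1 : ℕ) : ℂ) = (z + l) + 1 := by push_cast; ring
    rw [h1, Complex.Gamma_add_one _ hzl, ih, pochC_succ]; ring

lemma cpow_mul_pow {t : ℝ} (ht : 0 ≤ t) {w : ℂ} (hw : 0 < w.re) (l : ℕ) :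
    (t : ℂ) ^ (w - 1) * (t : ℂ) ^ l = (t : ℂ) ^ (w + l - 1) := by
  rcases eq_or_lt_of_le ht with h0 | hpos
  · rcases Nat.eq_zero_or_pos l with rfl | hl
    · simp
    · have hw' : w + l - 1 ≠ 0 := by
        intro h
        have := congrArg Complex.re h
        simp [Complex.add_re, Complex.sub_re, Complex.natCast_re] at this
        have hl1 : (1:ℝ) ≤ (l:ℝ) := by exact_mod_cast hl
        linarith
      rw [← h0]
      push_cast
      rw [zero_pow (by omega : l ≠ 0), mul_zero, Complex.zero_cpow hw']
  · have ht' : (t : ℂ) ≠ 0 := by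
      simpa using ne_of_gt hpos
    rw [← Complex.cpow_natCast, ← Complex.cpow_add _ _ ht']
    congr 1
    ring

theorem stmt_5 (a μ : ℝ) (ha : 0 < a) (hμ : -1/2 < μ) (n : ℕ) (ξ : ℝ) :
    ∫ u in (-1 : ℝ)..1,
        ((1 : ℂ) - (u : ℂ)) ^ ((a : ℂ) + Complex.I * (ξ : ℂ) / 2 - 1) *
        ((1 : ℂ) + (u : ℂ)) ^ ((a : ℂ) - Complex.I * (ξ : ℂ) / 2 - 1) *
        ((Geg n μ u : ℝ) : ℂ)
      = ((((2 : ℝ) ^ (2 * a - 1)) * pochR (2 * μ) n / (Nat.factorial n) : ℝ) : ℂ) *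
        BetaC ((a : ℂ) + Complex.I * (ξ : ℂ) / 2) ((a : ℂ) - Complex.I * (ξ : ℂ) / 2) *
        F32 n ((n : ℂ) + 2 * (μ : ℂ)) ((a : ℂ) + Complex.I * (ξ : ℂ) / 2)
          ((μ : ℂ) + 1/2) (2 * (a : ℂ)) := by
  set A : ℂ := (a : ℂ) + Complex.I * (ξ : ℂ) / 2 with hA
  set B : ℂ := (a : ℂ) - Complex.I * (ξ : ℂ) / 2 with hB
  have hAre : A.re = a := by simp [hA]
  have hBre : B.re = a := by simp [hB]
  have hA0 : 0 < A.re := by rw [hAre]; exact ha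
  have hB0 : 0 < B.re := by rw [hBre]; exact ha
  have hAB : A + B = 2 * (a : ℂ) := by rw [hA, hB]; ring
  have hAB0 : 0 < (A + B).re := by
    simp [Complex.add_re, hAre, hBre]; linarith
  -- coefficients
  set Cl : ℕ → ℂ := fun l =>
    (2:ℂ) ^ (A + B - 2) * ((pochR (2 * μ) n / (Nat.factorial n) : ℝ) : ℂ) *
      ((pochR (-(n : ℝ)) l * pochR ((n : ℝ) + 2 * μ) l /
        (pochR (μ + 1 / 2) l * (Nat.factorial l)) : ℝ) : ℂ) with hCl
  set f : ℝ → ℂ := fun u =>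
    ((1 : ℂ) - (u : ℂ)) ^ (A - 1) * ((1 : ℂ) + (u : ℂ)) ^ (B - 1) * ((Geg n μ u : ℝ) : ℂ)
    with hf
  -- step 1 : affine substitution
  have h1 : (∫ u in (-1:ℝ)..1, f u) = (2:ℝ) • ∫ x in (0:ℝ)..1, f (2 * x + -1) := by
    rw [intervalIntegral.integral_comp_mul_add f two_ne_zero (-1), smul_smul]
    norm_num
  -- step 2 : integrand on [0,1]
  have h2 : ∀ x ∈ Set.uIcc (0:ℝ) 1,
      f (2 * x + -1) = ∑ l ∈ Finset.range (n + 1),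
        Cl l * ((x : ℂ) ^ (B - 1) * (1 - (x : ℂ)) ^ (A + l - 1)) := by
    intro x hx
    rw [Set.uIcc_of_le (by norm_num : (0:ℝ) ≤ 1)] at hx
    obtain ⟨hx0, hx1⟩ := hx
    have hx1' : (0:ℝ) ≤ 1 - x := by linarith
    have e1 : ((1 : ℂ) - ((2 * x + -1 : ℝ) : ℂ)) = ((2:ℝ) : ℂ) * ((1 - x : ℝ) : ℂ) := by
      push_cast; ring
    have e2 : ((1 : ℂ) + ((2 * x + -1 : ℝ) : ℂ)) = ((2:ℝ) : ℂ) * ((x : ℝ) : ℂ) := by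
      push_cast; ring
    have e3 : Geg n μ (2 * x + -1) = pochR (2 * μ) n / (Nat.factorial n) *
        ∑ l ∈ Finset.range (n + 1),
          pochR (-(n : ℝ)) l * pochR ((n : ℝ) + 2 * μ) l /
            (pochR (μ + 1 / 2) l * (Nat.factorial l)) * (1 - x) ^ l := by
      rw [Geg]
      congr 1
      refine Finset.sum_congr rfl fun l _ => ?_
      congr 2
      ring
    rw [hf]
    simp only
    rw [e1, e2, e3, Complex.mul_cpow_ofReal_nonneg (by norm_num) hx1',
      Complex.mul_cpow_ofReal_nonneg (by norm_num) hx0]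
    push_cast
    rw [Finset.mul_sum, Finset.mul_sum]
    refine Finset.sum_congr rfl fun l _ => ?_
    have e4 := cpow_mul_pow hx1' hA0 l
    push_cast at e4
    have e5 : (2:ℂ) ^ (A - 1) * (2:ℂ) ^ (B - 1) = (2:ℂ) ^ (A + B - 2) := by
      rw [← Complex.cpow_add _ _ (two_ne_zero)]
      congr 1; ring
    rw [hCl]
    simp only
    push_cast
    rw [← e5, ← e4]
    ring
  have h2' : (∫ x in (0:ℝ)..1, f (2 * x + -1))
      = ∫ x in (0:ℝ)..1, ∑ l ∈ Finset.range (n + 1),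
          Cl l * ((x : ℂ) ^ (B - 1) * (1 - (x : ℂ)) ^ (A + l - 1)) :=
    intervalIntegral.integral_congr h2
  -- step 3 : swap sum and integral, identify beta integrals
  have hAl : ∀ l : ℕ, 0 < (A + l).re := by
    intro l
    simp only [Complex.add_re, Complex.natCast_re, hAre]
    have : (0:ℝ) ≤ l := Nat.cast_nonneg l
    linarith
  have h3 : (∫ x in (0:ℝ)..1, ∑ l ∈ Finset.range (n + 1),
        Cl l * ((x : ℂ) ^ (B - 1) * (1 - (x : ℂ)) ^ (A + l - 1)))
      = ∑ l ∈ Finset.range (n + 1), Cl l * Complex.betaIntegral B (A + l) := by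
    rw [intervalIntegral.integral_finset_sum]
    · refine Finset.sum_congr rfl fun l _ => ?_
      rw [intervalIntegral.integral_const_mul]
      rfl
    · intro l _
      exact (Complex.betaIntegral_convergent hB0 (hAl l)).const_mul _
  -- step 4 : beta in terms of Gamma/pochhammer
  have h4 : ∀ l : ℕ, Complex.betaIntegral B (A + l)
      = Complex.Gamma B * (pochC A l * Complex.Gamma A) /
          (pochC (A + B) l * Complex.Gamma (A + B)) := by
    intro l
    have hABl : 0 < (B + (A + l)).re := by
      simp only [Complex.add_re, Complex.natCast_re, hAre, hBre]
      have : (0:ℝ) ≤ l := Nat.cast_nonneg l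
      linarith
    have hne : Complex.Gamma (B + (A + l)) ≠ 0 := Complex.Gamma_ne_zero_of_re_pos hABl
    have key := Complex.Gamma_mul_Gamma_eq_betaIntegral hB0 (hAl l)
    have hbeta : Complex.betaIntegral B (A + l)
        = Complex.Gamma B * Complex.Gamma (A + l) / Complex.Gamma (B + (A + l)) := by
      rw [key, mul_comm, mul_div_assoc, div_self hne, mul_one]
    rw [hbeta, Gamma_add_nat hA0 l]
    have e6 : B + (A + (l:ℂ)) = (A + B) + l := by ring
    rw [e6, Gamma_add_nat hAB0 l]
  -- assemble
  rw [h1, h2', h3, Complex.real_smul, Finset.mul_sum]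
  have hpre : ((2:ℝ) : ℂ) * (2:ℂ) ^ (A + B - 2) = (((2:ℝ) ^ (2 * a - 1) : ℝ) : ℂ) := by
    rw [Complex.ofReal_cpow (by norm_num : (0:ℝ) ≤ 2),
      show (((2:ℝ)):ℂ) = (2:ℂ) by norm_num,
      show (((2 * a - 1 : ℝ)) : ℂ) = 1 + (A + B - 2) by rw [hAB]; push_cast; ring,
      Complex.cpow_add _ _ two_ne_zero, Complex.cpow_one]
  rw [BetaC, F32, Finset.mul_sum]
  refine Finset.sum_congr rfl fun l _ => ?_
  rw [h4 l, hCl]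
  simp only
  rw [hAB] at *
  push_cast [pochR_cast]
  rw [← hpre]
  push_cast
  ring
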